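/- Let (φ, σ) be a minimal action of the infinite dihedral group on the Cantor set X (σ² = id, σφσ = φ⁻¹, every orbit under the group generated by φ and σ is dense). If the action is not free, then φ is minimal as a homeomorphism of X. -/

import Mathlib

open Set

theorem stmt_18 {X : Type*} [TopologicalSpace X] [CompactSpace X] [T2Space X]
    [TopologicalSpace.MetrizableSpace X] [TotallyDisconnectedSpace X] [PerfectSpace X]
    (φ σ : X ≃ₜ X) (hσ : ∀ x, σ (σ x) = x) (hrel : ∀ x, σ (φ (σ x)) = φ.symm x)
    (hmin : ∀ x : X,
      Dense {y : X | ∃ (n : ℤ) (i : Bool), (φ.toEquiv ^ n) (if i then σ x else x) = y})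
    (hnotfree : ∃ (n : ℤ) (i : Bool) (x : X),
      ¬(n = 0 ∧ i = false) ∧ (φ.toEquiv ^ n) (if i then σ x else x) = x) :
    ∀ x : X, Dense {y : X | ∃ n : ℤ, (φ.toEquiv ^ n) x = y} := by
  classical
  set e : Equiv.Perm X := φ.toEquiv with he
  set s : Equiv.Perm X := σ.toEquiv with hs
  have hss : s * s = 1 := by ext y; exact hσ y
  have hsinv : s⁻¹ = s := inv_eq_of_mul_eq_one_right hss
  have hses : s * e * s = e⁻¹ := by ext y; exact hrel y
  have hconjgrp : ∀ n : ℤ, s * e ^ n * s = e ^ (-n) := by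
    intro n
    have h1 : s * e ^ n * s⁻¹ = (s * e * s⁻¹) ^ n := by
      simpa [MulAut.conj_apply] using (map_zpow (MulAut.conj s) e n).symm
    rw [hsinv] at h1
    rw [h1, hses, inv_zpow, zpow_neg]
  have hconj : ∀ (n : ℤ) (y : X), σ ((e ^ n) y) = (e ^ (-n)) (σ y) := by
    intro n y
    have h := congrArg (fun f : Equiv.Perm X => f (σ y)) (hconjgrp n)
    simp only [Equiv.Perm.mul_apply] at h
    rw [show s (σ y) = y from hσ y] at h
    exact h
  -- continuity of powers
  have hcontpow : ∀ (ψ : X ≃ₜ X) (m : ℕ), Continuous fun y => (ψ.toEquiv ^ m) y := by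
    intro ψ m
    induction m with
    | zero => simp only [pow_zero]; exact continuous_id
    | succ k ih =>
      have hfun : (fun y => (ψ.toEquiv ^ (k + 1)) y)
          = fun y => (ψ.toEquiv ^ k) (ψ.toEquiv y) := by
        funext y; rw [pow_succ]; rfl
      rw [hfun]
      exact ih.comp ψ.continuous
  have hcont : ∀ j : ℤ, Continuous fun y => (e ^ j) y := by
    intro j
    rcases Int.eq_nat_or_neg j with ⟨m, rfl | rfl⟩
    · have hfun : (fun y => (e ^ (m : ℤ)) y) = fun y => (e ^ m) y := by
        funext y; rw [zpow_natCast]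
      rw [hfun]; exact hcontpow φ m
    · have heinv : e⁻¹ = φ.symm.toEquiv := rfl
      have hgrp : e ^ (-(m : ℤ)) = φ.symm.toEquiv ^ m := by
        rw [zpow_neg, zpow_natCast, ← inv_pow, heinv]
      have hfun : (fun y => (e ^ (-(m : ℤ))) y) = fun y => (φ.symm.toEquiv ^ m) y := by
        rw [hgrp]
      rw [hfun]; exact hcontpow φ.symm m
  -- no nontrivial power of φ has a fixed point
  have hnofix : ∀ (n : ℤ) (x0 : X), n ≠ 0 → (e ^ n) x0 ≠ x0 := by
    intro n x0 hn hfix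
    have hfix' : ∀ k : ℤ, (e ^ (n * k)) x0 = x0 := by
      intro k
      rw [zpow_mul]
      exact Equiv.Perm.zpow_apply_eq_self_of_apply_eq_self hfix k
    have hfixσ : (e ^ (-n)) (σ x0) = σ x0 := by
      have h := hconj n x0
      rw [hfix] at h
      exact h.symm
    have hfixσ' : ∀ k : ℤ, (e ^ (n * k)) (σ x0) = σ x0 := by
      intro k
      have h : (e ^ (-n)) (σ x0) = σ x0 := hfixσ
      have h2 := Equiv.Perm.zpow_apply_eq_self_of_apply_eq_self h (-k)
      rw [← zpow_mul] at h2
      simpa [neg_mul, mul_comm] using h2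
    set m : ℤ := (n.natAbs : ℤ) with hm
    have hmpos : 0 < m := by
      rw [hm]
      exact_mod_cast Nat.pos_of_ne_zero (Int.natAbs_ne_zero.mpr hn)
    have hmq : ∀ q : ℤ, ∃ k : ℤ, m * q = n * k := by
      intro q
      rcases Int.natAbs_eq n with h | h
      · exact ⟨q, by rw [hm, show ((n.natAbs : ℤ)) = n from h.symm]⟩
      · exact ⟨-q, by rw [hm, show ((n.natAbs : ℤ)) = -n from by omega]; ring⟩
    have hperiod : ∀ (k : ℤ) (z : X), (∀ j : ℤ, (e ^ (n * j)) z = z) →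
        (e ^ k) z = (e ^ (k % m)) z := by
      intro k z hz
      obtain ⟨j, hj⟩ := hmq (k / m)
      have hkk : k % m + n * j = k := by
        rw [← hj, add_comm]
        exact Int.mul_ediv_add_emod k m
      conv_lhs => rw [← hkk]
      rw [zpow_add]
      simp [Equiv.Perm.mul_apply, hz j]
    -- the full orbit of x0 is finite
    set T : Set X := ((fun r : ℤ => (e ^ r) x0) '' Set.Ico 0 m) ∪
        ((fun r : ℤ => (e ^ r) (σ x0)) '' Set.Ico 0 m) with hT
    have hTfin : T.Finite :=
      ((Set.finite_Ico 0 m).image _).union ((Set.finite_Ico 0 m).image _)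
    have hsub : {y : X | ∃ (k : ℤ) (i : Bool), (e ^ k) (if i then σ x0 else x0) = y} ⊆ T := by
      rintro y ⟨k, i, rfl⟩
      have hmem : k % m ∈ Set.Ico 0 m := ⟨Int.emod_nonneg k (by omega), Int.emod_lt_of_pos k hmpos⟩
      cases i with
      | false =>
        left
        exact ⟨k % m, hmem, (hperiod k x0 hfix').symm⟩
      | true =>
        right
        exact ⟨k % m, hmem, (hperiod k (σ x0) hfixσ').symm⟩
    have hTdense : Dense T := (hmin x0).mono hsub
    have hTuniv : T = Set.univ := by
      have := hTdense.closure_eq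
      rwa [hTfin.isClosed.closure_eq] at this
    have huinf : (Set.univ : Set X).Infinite := infinite_of_mem_nhds x0 Filter.univ_mem
    rw [← hTuniv] at huinf
    exact huinf hTfin
  -- extract a reflection with a fixed point
  obtain ⟨n, i, p, hni, hfix⟩ := hnotfree
  cases i with
  | false =>
    simp only [if_neg Bool.false_ne_true] at hfix
    exact absurd hfix (hnofix n p (fun h0 => hni ⟨h0, rfl⟩))
  | true =>
    simp only [if_pos rfl] at hfix
    -- σ p = e^(-n) p
    have hσp : σ p = (e ^ (-n)) p := by
      have h := congrArg (fun y => (e ^ (-n)) y) hfix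
      simpa [← Equiv.Perm.mul_apply, ← zpow_add] using h
    -- the φ-orbit of p is dense
    have hpdense : Dense {y : X | ∃ k : ℤ, (e ^ k) p = y} := by
      refine (hmin p).mono ?_
      rintro y ⟨k, j, rfl⟩
      cases j with
      | false => exact ⟨k, rfl⟩
      | true =>
        refine ⟨k + -n, ?_⟩
        show (e ^ (k + -n)) p = (e ^ k) (σ p)
        rw [hσp, zpow_add]
        rfl
    intro x
    set A : Set X := {y : X | ∃ k : ℤ, (e ^ k) x = y} with hA
    set Y : Set X := closure A with hY
    -- Y is φ-invariant
    have hinv : ∀ (j : ℤ) (y : X), y ∈ Y → (e ^ j) y ∈ Y := by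
      intro j y hy
      have himg : (fun z => (e ^ j) z) '' A ⊆ A := by
        rintro _ ⟨_, ⟨k, rfl⟩, rfl⟩
        refine ⟨j + k, ?_⟩
        rw [zpow_add]; rfl
      have h1 : (e ^ j) y ∈ (fun z => (e ^ j) z) '' closure A := ⟨y, hy, rfl⟩
      have h2 := image_closure_subset_closure_image (hcont j) h1
      exact closure_mono himg h2
    -- p or σ p lies in Y
    set B : Set X := {y : X | ∃ k : ℤ, (e ^ k) (σ x) = y} with hB
    have horbsub : {y : X | ∃ (k : ℤ) (j : Bool), (e ^ k) (if j then σ x else x) = y}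
        ⊆ A ∪ B := by
      rintro y ⟨k, j, rfl⟩
      cases j with
      | false => exact Or.inl ⟨k, rfl⟩
      | true => exact Or.inr ⟨k, rfl⟩
    have hpYZ : p ∈ Y ∪ closure B := by
      have h1 : p ∈ closure {y : X | ∃ (k : ℤ) (j : Bool), (e ^ k) (if j then σ x else x) = y} :=
        (hmin x) p
      have h2 := closure_mono horbsub h1
      rwa [closure_union] at h2
    have hq : ∃ q ∈ Y, ∃ k : ℤ, (e ^ k) p = q := by
      rcases hpYZ with hp | hp
      · exact ⟨p, hp, 0, by simp⟩
      · -- σ p ∈ Y since σ maps B into A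
        have himg : σ '' B ⊆ A := by
          rintro _ ⟨_, ⟨k, rfl⟩, rfl⟩
          refine ⟨-k, ?_⟩
          rw [hconj k (σ x), hσ]
        have h1 : σ p ∈ σ '' closure B := ⟨p, hp, rfl⟩
        have h2 := image_closure_subset_closure_image σ.continuous h1
        have h3 : σ p ∈ Y := closure_mono himg h2
        exact ⟨σ p, h3, -n, hσp.symm⟩
    obtain ⟨q, hqY, k, hk⟩ := hq
    -- orbit of p is in Y
    have horb : {y : X | ∃ j : ℤ, (e ^ j) p = y} ⊆ Y := by
      rintro _ ⟨j, rfl⟩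
      have : (e ^ j) p = (e ^ (j - k)) q := by
        rw [← hk, ← Equiv.Perm.mul_apply, ← zpow_add]
        ring_nf
      rw [this]
      exact hinv (j - k) q hqY
    have hd : Dense Y := hpdense.mono horb
    exact hd.of_closure
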